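/- Best tubal-rank-r approximation via truncated t-SVD in the Fourier domain reduces to blockwise best rank-r approximation: for T ∈ ℝ^{m×n×k} with t-SVD T = U * Θ * V†, the truncation T_r = Σ_{s=1}^r U(:,s,:) * Θ(s,s,:) * V(:,s,:)† satisfies ‖T − T_r‖_F² = (1/k) Σ_{ℓ=1}^{k} ‖T̃^{(ℓ)} − (T̃_r)^{(ℓ)}‖_F², where T̃^{(ℓ)} are the frontal slices of the DFT of T along mode 3 and each (T̃_r)^{(ℓ)} is the best rank-r approximation (truncated matrix SVD) of T̃^{(ℓ)}. -/

import Mathlib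

open scoped BigOperators Matrix

/-- Circular convolution of two length-`k` tubes. -/
def tubeConv {k : ℕ} [NeZero k] (a b : ZMod k → ℝ) : ZMod k → ℝ :=
  fun i => ∑ s : ZMod k, a s * b (i - s)

/-- Squared Frobenius norm of a real third-order tensor. -/
def frobSq {k m n : ℕ} [NeZero k] (T : Fin m → Fin n → ZMod k → ℝ) : ℝ :=
  ∑ i : Fin m, ∑ j : Fin n, ∑ t : ZMod k, (T i j t) ^ 2

/-- Squared Frobenius norm of a complex matrix. -/
noncomputable def frobSqC {α β : Type*} [Fintype α] [Fintype β] (M : Matrix α β ℂ) : ℝ :=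
  ∑ i : α, ∑ j : β, ‖M i j‖ ^ 2

/-- The `ℓ`-th frontal slice of the (unnormalized) DFT of a tensor along the
third mode, with `ω = exp(-2πi/k)`. -/
noncomputable def dftSlice {k m n : ℕ} [NeZero k] (T : Fin m → Fin n → ZMod k → ℝ)
    (ℓ : ZMod k) : Matrix (Fin m) (Fin n) ℂ :=
  Matrix.of fun i j =>
    ∑ t : ZMod k, (T i j t : ℂ) * Complex.exp (-2 * Real.pi * Complex.I / k) ^ (t.val * ℓ.val)

/-- The tubal-rank-`r` truncation `T_r = Σ_{s=1}^r U(:,s,:) * Θ(s,s,:) * V(:,s,:)†`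
of a t-SVD `T = U * Θ * V†`. -/
def truncTSVD {k m n : ℕ} [NeZero k] (r : ℕ) (hrm : r ≤ m) (hrn : r ≤ n)
    (U : Fin m → Fin m → ZMod k → ℝ) (Θ : Fin m → Fin n → ZMod k → ℝ)
    (V : Fin n → Fin n → ZMod k → ℝ) : Fin m → Fin n → ZMod k → ℝ :=
  fun i j t =>
    ∑ s : Fin r,
      tubeConv
        (tubeConv (fun u => U i (Fin.castLE hrm s) u)
          (fun u => Θ (Fin.castLE hrm s) (Fin.castLE hrn s) u))
        (fun u => V j (Fin.castLE hrn s) (-u)) t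

section Aux

open Complex Finset

/-! ### DFT character lemmas -/

noncomputable def ww (k : ℕ) : ℂ := Complex.exp (-2 * Real.pi * Complex.I / k)

lemma ww_pow_k (k : ℕ) [NeZero k] : ww k ^ k = 1 := by
  rw [ww, ← Complex.exp_nat_mul]
  rw [show (k:ℂ) * (-2 * Real.pi * Complex.I / k) = -(2 * Real.pi * Complex.I) by
    have hk : (k:ℂ) ≠ 0 := Nat.cast_ne_zero.mpr (NeZero.ne k)
    field_simp]
  rw [Complex.exp_neg, Complex.exp_two_pi_mul_I, inv_one]

lemma ww_prim (k : ℕ) [NeZero k] : IsPrimitiveRoot (ww k) k := by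
  have h := (Complex.isPrimitiveRoot_exp k (NeZero.ne k)).inv
  rwa [← Complex.exp_neg,
    show -(2 * (Real.pi:ℂ) * Complex.I / k) = -2 * Real.pi * Complex.I / k by ring] at h

lemma ww_pow_congr {k : ℕ} [NeZero k] {a b : ℕ} (h : a ≡ b [MOD k]) : ww k ^ a = ww k ^ b := by
  rw [pow_eq_pow_mod a (ww_pow_k k), pow_eq_pow_mod b (ww_pow_k k), h]

noncomputable def Echar {k : ℕ} [NeZero k] (t ℓ : ZMod k) : ℂ := ww k ^ (t.val * ℓ.val)

lemma Echar_zero {k : ℕ} [NeZero k] (ℓ : ZMod k) : Echar (0 : ZMod k) ℓ = 1 := by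
  simp [Echar, ZMod.val_zero]

lemma Echar_add {k : ℕ} [NeZero k] (t s ℓ : ZMod k) :
    Echar (t + s) ℓ = Echar t ℓ * Echar s ℓ := by
  rw [Echar, Echar, Echar, ← pow_add]
  refine ww_pow_congr ?_
  calc (t + s).val * ℓ.val ≡ (t.val + s.val) * ℓ.val [MOD k] := by
        rw [ZMod.val_add]; exact (Nat.mod_modEq _ k).mul_right _
    _ = t.val * ℓ.val + s.val * ℓ.val := by ring

lemma Echar_neg_mul {k : ℕ} [NeZero k] (t ℓ : ZMod k) : Echar (-t) ℓ * Echar t ℓ = 1 := by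
  rw [← Echar_add, neg_add_cancel, Echar_zero]

lemma Echar_neg {k : ℕ} [NeZero k] (t ℓ : ZMod k) : Echar (-t) ℓ = (Echar t ℓ)⁻¹ :=
  eq_inv_of_mul_eq_one_left (Echar_neg_mul t ℓ)

lemma conj_ww (k : ℕ) [NeZero k] : (starRingEnd ℂ) (ww k) = (ww k)⁻¹ := by
  rw [ww, ← Complex.exp_conj, ← Complex.exp_neg]
  congr 1
  rw [map_div₀, map_mul, map_mul, Complex.conj_I, Complex.conj_natCast, Complex.conj_ofReal]
  norm_num
  rw [map_ofNat]
  ring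

lemma conj_Echar {k : ℕ} [NeZero k] (t ℓ : ZMod k) :
    (starRingEnd ℂ) (Echar t ℓ) = Echar (-t) ℓ := by
  rw [Echar, map_pow, conj_ww, inv_pow, ← Echar, ← Echar_neg]

lemma sum_zmod_val {k : ℕ} [NeZero k] (f : ℕ → ℂ) :
    ∑ ℓ : ZMod k, f ℓ.val = ∑ j ∈ Finset.range k, f j := by
  refine Finset.sum_nbij' (i := fun ℓ => ℓ.val) (j := fun j => (j : ZMod k)) ?_ ?_ ?_ ?_ ?_
  · intro ℓ _; simpa using ZMod.val_lt ℓ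
  · intro j _; simp
  · intro ℓ _; simp [ZMod.natCast_val]
  · intro j hj; exact ZMod.val_cast_of_lt (by simpa using hj)
  · intro ℓ _; rfl

lemma sum_Echar {k : ℕ} [NeZero k] (d : ZMod k) :
    ∑ ℓ : ZMod k, Echar d ℓ = if d = 0 then (k : ℂ) else 0 := by
  have : ∀ ℓ : ZMod k, Echar d ℓ = (ww k ^ d.val) ^ ℓ.val := by
    intro ℓ; rw [Echar, pow_mul]
  simp_rw [this]
  rw [sum_zmod_val (fun j => (ww k ^ d.val) ^ j)]
  by_cases hd : d = 0
  · simp [hd, ZMod.val_zero]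
  · have hne : ww k ^ d.val ≠ 1 := by
      refine (ww_prim k).pow_ne_one_of_pos_of_lt ?_ (ZMod.val_lt d)
      exact (fun h => hd ((ZMod.val_eq_zero d).mp h))
    rw [if_neg hd, geom_sum_eq hne]
    rw [← pow_mul, mul_comm, pow_mul, ww_pow_k, one_pow, sub_self, zero_div]

/-! ### 1D Parseval and convolution theorems -/

lemma parseval_tube {k : ℕ} [NeZero k] (a : ZMod k → ℝ) :
    ∑ ℓ : ZMod k, ‖∑ t : ZMod k, (a t : ℂ) * Echar t ℓ‖ ^ 2 = k * ∑ t : ZMod k, a t ^ 2 := by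
  have key : ∀ z : ℂ, ((‖z‖ ^ 2 : ℝ) : ℂ) = z * (starRingEnd ℂ) z := by
    intro z
    rw [Complex.mul_conj, Complex.sq_norm]
  apply Complex.ofReal_injective
  rw [Complex.ofReal_sum]
  simp_rw [key]
  have conj_sum : ∀ ℓ : ZMod k, (starRingEnd ℂ) (∑ t : ZMod k, (a t : ℂ) * Echar t ℓ)
      = ∑ s : ZMod k, (a s : ℂ) * Echar (-s) ℓ := by
    intro ℓ
    rw [map_sum]
    exact Finset.sum_congr rfl fun s _ => by rw [map_mul, Complex.conj_ofReal, conj_Echar]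
  simp_rw [conj_sum, Finset.sum_mul_sum]
  rw [Finset.sum_comm]
  have inner1 : ∀ t : ZMod k, ∑ ℓ : ZMod k, ∑ s : ZMod k,
      ((a t : ℂ) * Echar t ℓ) * ((a s : ℂ) * Echar (-s) ℓ)
      = ∑ s : ZMod k, ∑ ℓ : ZMod k, ((a t : ℂ) * Echar t ℓ) * ((a s : ℂ) * Echar (-s) ℓ) :=
    fun t => Finset.sum_comm
  simp_rw [inner1]
  have inner2 : ∀ t s : ZMod k,
      ∑ ℓ : ZMod k, ((a t : ℂ) * Echar t ℓ) * ((a s : ℂ) * Echar (-s) ℓ)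
      = (a t : ℂ) * (a s : ℂ) * (if t - s = 0 then (k : ℂ) else 0) := by
    intro t s
    have hterm : ∀ ℓ : ZMod k, ((a t : ℂ) * Echar t ℓ) * ((a s : ℂ) * Echar (-s) ℓ)
        = (a t : ℂ) * (a s : ℂ) * Echar (t - s) ℓ := by
      intro ℓ
      rw [show t - s = t + -s from sub_eq_add_neg t s, Echar_add]
      ring
    simp_rw [hterm, ← Finset.mul_sum, sum_Echar]
  simp_rw [inner2, sub_eq_zero, mul_ite, mul_zero, Finset.sum_ite_eq, Finset.mem_univ,
    if_true]
  push_cast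
  rw [Finset.mul_sum]
  exact Finset.sum_congr rfl fun t _ => by ring

lemma dft_conv {k : ℕ} [NeZero k] (a b : ZMod k → ℝ) (ℓ : ZMod k) :
    ∑ t : ZMod k, ((tubeConv a b t : ℝ) : ℂ) * Echar t ℓ
      = (∑ t : ZMod k, (a t : ℂ) * Echar t ℓ) * (∑ t : ZMod k, (b t : ℂ) * Echar t ℓ) := by
  rw [Finset.sum_mul_sum]
  unfold tubeConv
  push_cast
  simp_rw [Finset.sum_mul]
  rw [Finset.sum_comm]
  refine Finset.sum_congr rfl fun s _ => ?_
  refine Fintype.sum_equiv (Equiv.subRight s) _ _ ?_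
  intro t
  simp only [Equiv.subRight_apply]
  have h1 : Echar t ℓ = Echar s ℓ * Echar (t - s) ℓ := by
    rw [← Echar_add, add_sub_cancel]
  rw [h1]
  ring

lemma dft_negarg {k : ℕ} [NeZero k] (c : ZMod k → ℝ) (ℓ : ZMod k) :
    ∑ t : ZMod k, ((c (-t) : ℝ) : ℂ) * Echar t ℓ
      = (starRingEnd ℂ) (∑ t : ZMod k, (c t : ℂ) * Echar t ℓ) := by
  rw [map_sum]
  refine Fintype.sum_equiv (Equiv.neg (ZMod k)) _ _ ?_
  intro t
  simp only [Equiv.neg_apply]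
  rw [map_mul, Complex.conj_ofReal, conj_Echar, neg_neg]

end Aux

section Aux2

open Finset

/-! ### dftSlice lemmas -/

lemma dftSlice_apply {k m n : ℕ} [NeZero k] (T : Fin m → Fin n → ZMod k → ℝ)
    (ℓ : ZMod k) (i : Fin m) (j : Fin n) :
    dftSlice T ℓ i j = ∑ t : ZMod k, (T i j t : ℂ) * Echar t ℓ := rfl

lemma dftSlice_sub {k m n : ℕ} [NeZero k] (S T : Fin m → Fin n → ZMod k → ℝ) (ℓ : ZMod k) :
    dftSlice (fun i j t => S i j t - T i j t) ℓ = dftSlice S ℓ - dftSlice T ℓ := by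
  ext i j
  simp only [dftSlice_apply, Matrix.sub_apply]
  rw [← Finset.sum_sub_distrib]
  refine Finset.sum_congr rfl fun t _ => ?_
  push_cast
  ring

lemma parseval_tensor {k m n : ℕ} [NeZero k] (A : Fin m → Fin n → ZMod k → ℝ) :
    frobSq A = (1 / (k : ℝ)) * ∑ ℓ : ZMod k, frobSqC (dftSlice A ℓ) := by
  have hk : (k : ℝ) ≠ 0 := Nat.cast_ne_zero.mpr (NeZero.ne k)
  unfold frobSqC
  simp_rw [dftSlice_apply]
  rw [Finset.sum_comm]
  have : ∀ i : Fin m, ∑ ℓ : ZMod k, ∑ j : Fin n, ‖∑ t : ZMod k, (A i j t : ℂ) * Echar t ℓ‖ ^ 2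
      = ∑ j : Fin n, (k : ℝ) * ∑ t : ZMod k, A i j t ^ 2 := by
    intro i
    rw [Finset.sum_comm]
    exact Finset.sum_congr rfl fun j _ => parseval_tube (fun t => A i j t)
  simp_rw [this]
  unfold frobSq
  rw [Finset.mul_sum]
  refine Finset.sum_congr rfl fun i _ => ?_
  rw [Finset.mul_sum]
  refine Finset.sum_congr rfl fun j _ => ?_
  rw [← mul_assoc, one_div, inv_mul_cancel₀ hk, one_mul]

/-! ### The truncated slice as a matrix product -/

/-- The matrix `S` with all entries zeroed out except diagonal ones among the first `r`. -/
def Dmat {m n : ℕ} (r : ℕ) (S : Matrix (Fin m) (Fin n) ℂ) : Matrix (Fin m) (Fin n) ℂ :=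
  Matrix.of fun p q => if (p : ℕ) = (q : ℕ) ∧ (q : ℕ) < r then S p q else 0

lemma sum_fin_lt {n r : ℕ} (hrn : r ≤ n) (f : Fin n → ℂ)
    (hf : ∀ q : Fin n, r ≤ (q : ℕ) → f q = 0) :
    ∑ q : Fin n, f q = ∑ s : Fin r, f (Fin.castLE hrn s) := by
  classical
  have h1 : ∑ s : Fin r, f (Fin.castLE hrn s)
      = ∑ q ∈ Finset.univ.map (Fin.castLEEmb hrn), f q := by
    rw [Finset.sum_map]; rfl
  rw [h1]
  refine (Finset.sum_subset (Finset.subset_univ _) ?_).symm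
  intro q _ hq
  refine hf q ?_
  by_contra hlt
  push_neg at hlt
  refine hq (Finset.mem_map.mpr ⟨⟨(q : ℕ), hlt⟩, Finset.mem_univ _, ?_⟩)
  exact Fin.ext rfl

lemma trunc_slice {k m n r : ℕ} [NeZero k] (hrm : r ≤ m) (hrn : r ≤ n)
    (U : Fin m → Fin m → ZMod k → ℝ) (Θ : Fin m → Fin n → ZMod k → ℝ)
    (V : Fin n → Fin n → ZMod k → ℝ) (ℓ : ZMod k) :
    dftSlice (truncTSVD r hrm hrn U Θ V) ℓ
      = dftSlice U ℓ * Dmat r (dftSlice Θ ℓ) * (dftSlice V ℓ)ᴴ := by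
  ext i j
  rw [dftSlice_apply]
  -- step 1: pointwise convolution theorem
  have step1 : ∑ t : ZMod k, ((truncTSVD r hrm hrn U Θ V i j t : ℝ) : ℂ) * Echar t ℓ
      = ∑ s : Fin r, dftSlice U ℓ i (Fin.castLE hrm s)
          * dftSlice Θ ℓ (Fin.castLE hrm s) (Fin.castLE hrn s)
          * (starRingEnd ℂ) (dftSlice V ℓ j (Fin.castLE hrn s)) := by
    unfold truncTSVD
    push_cast
    simp_rw [Finset.sum_mul]
    rw [Finset.sum_comm]
    refine Finset.sum_congr rfl fun s _ => ?_
    rw [dftSlice_apply, dftSlice_apply, dftSlice_apply, ← dft_negarg, ← dft_conv, ← dft_conv]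
  rw [step1]
  -- step 2: identify with the matrix product
  have step2 : ∀ q : Fin n, (dftSlice U ℓ * Dmat r (dftSlice Θ ℓ)) i q
      = if h : (q : ℕ) < r then
          dftSlice U ℓ i ⟨(q : ℕ), lt_of_lt_of_le h hrm⟩
            * dftSlice Θ ℓ ⟨(q : ℕ), lt_of_lt_of_le h hrm⟩ q
        else 0 := by
    intro q
    rw [Matrix.mul_apply]
    by_cases h : (q : ℕ) < r
    · rw [dif_pos h]
      rw [Finset.sum_eq_single (⟨(q : ℕ), lt_of_lt_of_le h hrm⟩ : Fin m)]
      · simp only [Dmat, Matrix.of_apply]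
        simp [h]
      · intro p _ hp
        simp only [Dmat, Matrix.of_apply]
        rw [if_neg, mul_zero]
        rintro ⟨hpq, -⟩
        exact hp (Fin.ext hpq)
      · intro hmem; exact absurd (Finset.mem_univ _) hmem
    · rw [dif_neg h]
      refine Finset.sum_eq_zero fun p _ => ?_
      simp only [Dmat, Matrix.of_apply]
      rw [if_neg, mul_zero]
      rintro ⟨-, hqr⟩
      exact h hqr
  rw [Matrix.mul_apply]
  have hzero : ∀ q : Fin n, r ≤ (q : ℕ) →
      (dftSlice U ℓ * Dmat r (dftSlice Θ ℓ)) i q * (dftSlice V ℓ)ᴴ q j = 0 := by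
    intro q hq
    rw [step2 q, dif_neg (not_lt.mpr hq), zero_mul]
  rw [sum_fin_lt hrn _ hzero]
  refine Finset.sum_congr rfl fun s _ => ?_
  have hlt : ((Fin.castLE hrn s : Fin n) : ℕ) < r := s.isLt
  rw [step2, dif_pos hlt]
  have : (⟨((Fin.castLE hrn s : Fin n) : ℕ), lt_of_lt_of_le hlt hrm⟩ : Fin m)
      = Fin.castLE hrm s := rfl
  rw [this, Matrix.conjTranspose_apply]
  rfl

end Aux2

section Aux3

open Finset

/-! ### Frobenius norm: basic lemmas -/

lemma conj_mul_self_eq (z : ℂ) : (starRingEnd ℂ) z * z = ((‖z‖ ^ 2 : ℝ) : ℂ) := by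
  rw [mul_comm, Complex.mul_conj]
  norm_cast
  rw [Complex.sq_norm]

lemma frobSqC_col {α β : Type*} [Fintype α] [Fintype β] (M : Matrix α β ℂ) :
    frobSqC M = ∑ j : β, ∑ i : α, ‖M i j‖ ^ 2 := Finset.sum_comm

lemma trace_conjTranspose_mul {α β : Type*} [Fintype α] [Fintype β]
    [DecidableEq α] [DecidableEq β] (M : Matrix α β ℂ) :
    Matrix.trace (Mᴴ * M) = ((frobSqC M : ℝ) : ℂ) := by
  unfold frobSqC Matrix.trace
  push_cast
  rw [Finset.sum_comm]
  refine Finset.sum_congr rfl fun j _ => ?_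
  simp only [Matrix.diag_apply, Matrix.mul_apply, Matrix.conjTranspose_apply]
  refine Finset.sum_congr rfl fun i _ => ?_
  rw [show star (M i j) = (starRingEnd ℂ) (M i j) from rfl, conj_mul_self_eq]
  push_cast
  ring

lemma frobSqC_unitary {m n : ℕ} (Uh : Matrix (Fin m) (Fin m) ℂ) (Vh : Matrix (Fin n) (Fin n) ℂ)
    (X : Matrix (Fin m) (Fin n) ℂ) (hU : Uhᴴ * Uh = 1) (hV : Vhᴴ * Vh = 1) :
    frobSqC (Uh * X * Vhᴴ) = frobSqC X := by
  apply Complex.ofReal_injective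
  rw [← trace_conjTranspose_mul, ← trace_conjTranspose_mul]
  have key : (Uh * X * Vhᴴ)ᴴ * (Uh * X * Vhᴴ) = Vh * (Xᴴ * X) * Vhᴴ := by
    rw [Matrix.conjTranspose_mul, Matrix.conjTranspose_mul,
      Matrix.conjTranspose_conjTranspose]
    calc Vh * (Xᴴ * Uhᴴ) * (Uh * X * Vhᴴ)
        = Vh * Xᴴ * (Uhᴴ * Uh) * (X * Vhᴴ) := by
          simp only [Matrix.mul_assoc]
      _ = Vh * (Xᴴ * X) * Vhᴴ := by rw [hU, Matrix.mul_one]; simp only [Matrix.mul_assoc]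
  rw [key, Matrix.trace_mul_cycle, hV, Matrix.one_mul]

/-! ### Euclidean space helpers -/

lemma eucl_norm_sq {ι : Type*} [Fintype ι] (v : EuclideanSpace ℂ ι) :
    ‖v‖ ^ 2 = ∑ i, ‖v i‖ ^ 2 := by
  rw [EuclideanSpace.norm_eq, Real.sq_sqrt]
  exact Finset.sum_nonneg fun _ _ => sq_nonneg _

section AbstractProj

variable {E : Type*} [NormedAddCommGroup E] [InnerProductSpace ℂ E] [FiniteDimensional ℂ E]

lemma proj_bound (K : Submodule ℂ E) (x y : E) (hy : y ∈ K) :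
    ‖x‖ ^ 2 - ‖K.orthogonalProjectionOnto x‖ ^ 2 ≤ ‖x - y‖ ^ 2 := by
  have h1 := Submodule.norm_sq_eq_add_norm_sq_projection x K
  have h2 := Submodule.norm_sq_eq_add_norm_sq_projection (x - y) K
  have h3 : Kᗮ.orthogonalProjectionOnto (x - y) = Kᗮ.orthogonalProjectionOnto x := by
    rw [map_sub, Submodule.orthogonalProjectionOnto_apply_of_mem_orthogonal
      (Submodule.le_orthogonal_orthogonal K hy), sub_zero]
  rw [h3] at h2
  nlinarith [sq_nonneg ‖K.orthogonalProjectionOnto (x - y)‖]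

lemma proj_norm_le (K : Submodule ℂ E) (x : E) :
    ‖K.orthogonalProjectionOnto x‖ ^ 2 ≤ ‖x‖ ^ 2 := by
  have h1 := Submodule.norm_sq_eq_add_norm_sq_projection x K
  nlinarith [sq_nonneg ‖Kᗮ.orthogonalProjectionOnto x‖]

lemma sum_proj_basis {ι : Type*} [Fintype ι] [DecidableEq ι]
    (v : OrthonormalBasis ι ℂ E) (K : Submodule ℂ E) :
    ∑ i, ‖K.orthogonalProjectionOnto (v i)‖ ^ 2 = Module.finrank ℂ K := by
  classical
  set b := stdOrthonormalBasis ℂ K with hb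
  have key1 : ∀ x : E, ‖K.orthogonalProjectionOnto x‖ ^ 2
      = ∑ α, ‖(inner (𝕜 := ℂ) ((b α : K) : E) x : ℂ)‖ ^ 2 := by
    intro x
    rw [← b.repr.norm_map (K.orthogonalProjectionOnto x), eucl_norm_sq]
    refine Finset.sum_congr rfl fun α _ => ?_
    rw [b.repr_apply_apply]
    have horth : inner (𝕜 := ℂ) (x - ((K.orthogonalProjectionOnto x : K) : E)) ((b α : K) : E) = 0 :=
      K.starProjection_inner_eq_zero x ((b α : K) : E) (b α).2
    have hz : (inner (𝕜 := ℂ) ((b α : K) : E)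
        (x - ((K.orthogonalProjectionOnto x : K) : E)) : ℂ) = 0 := by
      rw [← inner_conj_symm, horth, map_zero]
    rw [inner_sub_right] at hz
    have hinner : (inner (𝕜 := ℂ) (b α) (K.orthogonalProjectionOnto x) : ℂ)
        = inner (𝕜 := ℂ) ((b α : K) : E) x := by
      rw [Submodule.coe_inner]
      exact (sub_eq_zero.mp hz).symm
    rw [hinner]
  have key2 : ∀ u : E, ∑ i, ‖(inner (𝕜 := ℂ) u (v i) : ℂ)‖ ^ 2 = ‖u‖ ^ 2 := by
    intro u
    rw [← v.repr.norm_map u, eucl_norm_sq]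
    refine Finset.sum_congr rfl fun i _ => ?_
    rw [v.repr_apply_apply, ← inner_conj_symm, RCLike.norm_conj]
  calc ∑ i, ‖K.orthogonalProjectionOnto (v i)‖ ^ 2
      = ∑ i, ∑ α, ‖(inner (𝕜 := ℂ) ((b α : K) : E) (v i) : ℂ)‖ ^ 2 :=
        Finset.sum_congr rfl fun i _ => key1 (v i)
    _ = ∑ α, ∑ i, ‖(inner (𝕜 := ℂ) ((b α : K) : E) (v i) : ℂ)‖ ^ 2 := Finset.sum_comm
    _ = ∑ α : Fin (Module.finrank ℂ K), (1 : ℝ) := by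
        refine Finset.sum_congr rfl fun α _ => ?_
        rw [key2 ((b α : K) : E)]
        have : ‖((b α : K) : E)‖ = 1 := by
          rw [show ‖((b α : K) : E)‖ = ‖b α‖ from rfl]
          exact b.orthonormal.1 α
        rw [this, one_pow]
    _ = Module.finrank ℂ K := by simp

end AbstractProj


end Aux3

section Aux4

open Finset

lemma card_filter_lt {n r : ℕ} (hrn : r ≤ n) :
    (Finset.univ.filter (fun j : Fin n => (j : ℕ) < r)).card = r := by
  classical
  have : Finset.univ.filter (fun j : Fin n => (j : ℕ) < r)
      = Finset.univ.map (Fin.castLEEmb hrn) := by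
    ext q
    simp only [Finset.mem_filter, Finset.mem_univ, true_and, Finset.mem_map]
    constructor
    · intro h
      exact ⟨⟨(q : ℕ), h⟩, Fin.ext rfl⟩
    · rintro ⟨s, -, rfl⟩
      exact s.isLt
  rw [this, Finset.card_map, Finset.card_univ, Fintype.card_fin]

lemma rearrange {n r : ℕ} (s d : Fin n → ℝ) (hs0 : ∀ j, 0 ≤ s j)
    (hmono : ∀ j j' : Fin n, (j : ℕ) ≤ (j' : ℕ) → s j' ≤ s j)
    (hd0 : ∀ j, 0 ≤ d j) (hd1 : ∀ j, d j ≤ 1) (hsum : ∑ j : Fin n, d j ≤ r) :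
    ∑ j : Fin n, (if r ≤ (j : ℕ) then s j ^ 2 else 0)
      ≤ ∑ j : Fin n, s j ^ 2 * (1 - d j) := by
  classical
  set Fhi := Finset.univ.filter (fun j : Fin n => r ≤ (j : ℕ)) with hFhi
  set Flo := Finset.univ.filter (fun j : Fin n => ¬ r ≤ (j : ℕ)) with hFlo
  have hsplit : ∀ f : Fin n → ℝ, ∑ j, f j = ∑ j ∈ Fhi, f j + ∑ j ∈ Flo, f j :=
    fun f => (Finset.sum_filter_add_sum_filter_not _ _ f).symm
  have hLHS : ∑ j : Fin n, (if r ≤ (j : ℕ) then s j ^ 2 else 0) = ∑ j ∈ Fhi, s j ^ 2 :=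
    (Finset.sum_filter _ _).symm
  rw [hLHS, hsplit (fun j => s j ^ 2 * (1 - d j))]
  have e1 : ∑ j ∈ Fhi, s j ^ 2 * (1 - d j)
      = ∑ j ∈ Fhi, s j ^ 2 - ∑ j ∈ Fhi, s j ^ 2 * d j := by
    rw [← Finset.sum_sub_distrib]
    exact Finset.sum_congr rfl fun j _ => by ring
  suffices h : ∑ j ∈ Fhi, s j ^ 2 * d j ≤ ∑ j ∈ Flo, s j ^ 2 * (1 - d j) by linarith
  by_cases hrn : r < n
  · set c := s ⟨r, hrn⟩ ^ 2 with hc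
    have hc0 : 0 ≤ c := sq_nonneg _
    have hA : ∑ j ∈ Fhi, s j ^ 2 * d j ≤ ∑ j ∈ Fhi, c * d j := by
      refine Finset.sum_le_sum fun j hj => ?_
      have hjr : r ≤ (j : ℕ) := (Finset.mem_filter.mp hj).2
      have hsj : s j ≤ s ⟨r, hrn⟩ := hmono ⟨r, hrn⟩ j hjr
      have : s j ^ 2 ≤ c := pow_le_pow_left₀ (hs0 j) hsj 2
      exact mul_le_mul_of_nonneg_right this (hd0 j)
    have hB : ∑ j ∈ Flo, c * (1 - d j) ≤ ∑ j ∈ Flo, s j ^ 2 * (1 - d j) := by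
      refine Finset.sum_le_sum fun j hj => ?_
      have hjr : (j : ℕ) < r := by
        have := (Finset.mem_filter.mp hj).2; omega
      have hsj : s ⟨r, hrn⟩ ≤ s j := hmono j ⟨r, hrn⟩ (le_of_lt hjr)
      have : c ≤ s j ^ 2 := pow_le_pow_left₀ (hs0 _) hsj 2
      exact mul_le_mul_of_nonneg_right this (by linarith [hd1 j])
    have hC : ∑ j ∈ Fhi, c * d j ≤ ∑ j ∈ Flo, c * (1 - d j) := by
      rw [← Finset.mul_sum, ← Finset.mul_sum]
      refine mul_le_mul_of_nonneg_left ?_ hc0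
      have hcard : Flo.card = r := by
        have hFeq : Flo = Finset.univ.filter (fun j : Fin n => (j : ℕ) < r) := by
          ext j; simp [hFlo, not_le]
        rw [hFeq]
        exact card_filter_lt (le_of_lt hrn)
      have h1 : ∑ j ∈ Flo, (1 - d j) = (r : ℝ) - ∑ j ∈ Flo, d j := by
        rw [Finset.sum_sub_distrib, Finset.sum_const, hcard, nsmul_eq_mul, mul_one]
      have h2 : ∑ j ∈ Fhi, d j + ∑ j ∈ Flo, d j = ∑ j, d j :=
        Finset.sum_filter_add_sum_filter_not _ _ _
      linarith
    linarith
  · have hFhiempty : Fhi = ∅ := by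
      rw [hFhi, Finset.filter_eq_empty_iff]
      intro j _
      have := j.isLt; omega
    rw [hFhiempty, Finset.sum_empty]
    refine Finset.sum_nonneg fun j _ => ?_
    have := hd1 j
    have := sq_nonneg (s j)
    nlinarith

lemma key_ineq {m n : ℕ} (r : ℕ)
    (S N : Matrix (Fin m) (Fin n) ℂ)
    (hSd : ∀ (i : Fin m) (j : Fin n), (i : ℕ) ≠ (j : ℕ) → S i j = 0)
    (hSpos : ∀ (i : Fin m) (j : Fin n), (i : ℕ) = (j : ℕ) → ∃ c : ℝ, 0 ≤ c ∧ S i j = (c : ℂ))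
    (hSord : ∀ (i i' : Fin m) (j j' : Fin n),
      (i : ℕ) = (j : ℕ) → (i' : ℕ) = (j' : ℕ) → (i : ℕ) ≤ (i' : ℕ) →
      ‖S i' j'‖ ≤ ‖S i j‖)
    (hN : N.rank ≤ r) :
    frobSqC (S - Dmat r S) ≤ frobSqC (S - N) := by
  classical
  -- the "singular values" living on the columns
  set sv : Fin n → ℝ := fun j => if h : (j : ℕ) < m then ‖S ⟨(j : ℕ), h⟩ j‖ else 0 with hsv
  have hsv0 : ∀ j, 0 ≤ sv j := by
    intro j; rw [hsv]; dsimp only; split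
    · exact norm_nonneg _
    · exact le_refl 0
  have hsvdiag : ∀ (j : Fin n) (h : (j : ℕ) < m), S ⟨(j : ℕ), h⟩ j = ((sv j : ℝ) : ℂ) := by
    intro j h
    obtain ⟨c, hc0, hce⟩ := hSpos ⟨(j : ℕ), h⟩ j rfl
    rw [hsv]; dsimp only; rw [dif_pos h, hce, Complex.norm_real, Real.norm_eq_abs,
      abs_of_nonneg hc0]
  have hsvmono : ∀ j j' : Fin n, (j : ℕ) ≤ (j' : ℕ) → sv j' ≤ sv j := by
    intro j j' hjj'
    rw [hsv]; dsimp only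
    by_cases h' : (j' : ℕ) < m
    · have h : (j : ℕ) < m := lt_of_le_of_lt hjj' h'
      rw [dif_pos h, dif_pos h']
      exact hSord ⟨(j : ℕ), h⟩ ⟨(j' : ℕ), h'⟩ j j' rfl rfl hjj'
    · rw [dif_neg h']
      split
      · exact norm_nonneg _
      · exact le_refl 0
  -- LHS is the tail sum of squared singular values
  have hLHS : frobSqC (S - Dmat r S) = ∑ j : Fin n, (if r ≤ (j : ℕ) then sv j ^ 2 else 0) := by
    rw [frobSqC_col]
    refine Finset.sum_congr rfl fun j _ => ?_
    by_cases hjr : r ≤ (j : ℕ)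
    · rw [if_pos hjr]
      have hent : ∀ i : Fin m, (S - Dmat r S) i j = S i j := by
        intro i
        rw [Matrix.sub_apply, Dmat]
        simp only [Matrix.of_apply]
        rw [if_neg, sub_zero]
        rintro ⟨-, hlt⟩
        omega
      by_cases hjm : (j : ℕ) < m
      · rw [Finset.sum_eq_single (⟨(j : ℕ), hjm⟩ : Fin m)]
        · rw [hent, hsvdiag j hjm, Complex.norm_real, Real.norm_eq_abs, sq_abs]
        · intro i _ hi
          rw [hent, hSd i j (fun hc => hi (Fin.ext hc)), norm_zero]
          exact zero_pow (by norm_num)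
        · intro hmem; exact absurd (Finset.mem_univ _) hmem
      · have hsvz : sv j = 0 := by rw [hsv]; exact dif_neg hjm
        rw [hsvz, show (0:ℝ) ^ 2 = 0 by ring]
        refine Finset.sum_eq_zero fun i _ => ?_
        rw [hent, hSd i j (by omega), norm_zero]
        exact zero_pow (by norm_num)
    · rw [if_neg hjr]
      refine Finset.sum_eq_zero fun i _ => ?_
      rw [Matrix.sub_apply, Dmat]
      simp only [Matrix.of_apply]
      by_cases hij : (i : ℕ) = (j : ℕ)
      · rw [if_pos ⟨hij, by omega⟩, sub_self, norm_zero]; ring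
      · rw [if_neg (fun hc => hij hc.1), sub_zero, hSd i j hij, norm_zero]; ring
  -- the column space of N
  set eL := WithLp.linearEquiv 2 ℂ (Fin m → ℂ) with heL
  set K : Submodule ℂ (EuclideanSpace ℂ (Fin m)) :=
    Submodule.map eL.symm.toLinearMap (Submodule.span ℂ (Set.range Nᵀ)) with hK
  have hKrank : Module.finrank ℂ K ≤ r := by
    rw [hK, LinearEquiv.finrank_map_eq]
    rw [Matrix.rank_eq_finrank_span_cols] at hN
    exact hN
  set dv : Fin m → ℝ :=
    fun i => ‖K.orthogonalProjectionOnto (EuclideanSpace.single i (1 : ℂ))‖ ^ 2 with hdv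
  have hdv0 : ∀ i, 0 ≤ dv i := fun i => sq_nonneg _
  have hdv1 : ∀ i, dv i ≤ 1 := by
    intro i
    have := proj_norm_le K (EuclideanSpace.single i (1 : ℂ))
    rwa [EuclideanSpace.norm_single, norm_one, one_pow] at this
  set d' : Fin n → ℝ := fun j => if h : (j : ℕ) < m then dv ⟨(j : ℕ), h⟩ else 0 with hd'
  have hd'0 : ∀ j, 0 ≤ d' j := by
    intro j; rw [hd']; dsimp only; split
    · exact hdv0 _
    · exact le_refl 0
  have hd'1 : ∀ j, d' j ≤ 1 := by
    intro j; rw [hd']; dsimp only; split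
    · exact hdv1 _
    · exact zero_le_one
  have hd'sum : ∑ j, d' j ≤ (r : ℝ) := by
    have hji : ∀ j : Fin n, d' j = ∑ i : Fin m, (if (i : ℕ) = (j : ℕ) then dv i else 0) := by
      intro j
      rw [hd']; dsimp only
      by_cases h : (j : ℕ) < m
      · rw [dif_pos h, Finset.sum_eq_single (⟨(j : ℕ), h⟩ : Fin m)]
        · rw [if_pos rfl]
        · intro i _ hi
          rw [if_neg (fun hc => hi (Fin.ext hc))]
        · intro hmem; exact absurd (Finset.mem_univ _) hmem
      · rw [dif_neg h]
        refine (Finset.sum_eq_zero fun i _ => ?_).symm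
        rw [if_neg (by omega)]
    have hij : ∀ i : Fin m, ∑ j : Fin n, (if (i : ℕ) = (j : ℕ) then dv i else 0) ≤ dv i := by
      intro i
      by_cases h : (i : ℕ) < n
      · rw [Finset.sum_eq_single (⟨(i : ℕ), h⟩ : Fin n)]
        · rw [if_pos rfl]
        · intro j _ hj
          rw [if_neg (fun hc => hj (Fin.ext hc.symm))]
        · intro hmem; exact absurd (Finset.mem_univ _) hmem
      · refine le_trans (le_of_eq (Finset.sum_eq_zero fun j _ => ?_)) (hdv0 i)
        rw [if_neg (by omega)]
    calc ∑ j, d' j = ∑ j : Fin n, ∑ i : Fin m, (if (i : ℕ) = (j : ℕ) then dv i else 0) :=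
          Finset.sum_congr rfl fun j _ => hji j
      _ = ∑ i : Fin m, ∑ j : Fin n, (if (i : ℕ) = (j : ℕ) then dv i else 0) := Finset.sum_comm
      _ ≤ ∑ i : Fin m, dv i := Finset.sum_le_sum fun i _ => hij i
      _ = Module.finrank ℂ K := by
          rw [← sum_proj_basis (EuclideanSpace.basisFun (Fin m) ℂ) K]
          refine Finset.sum_congr rfl fun i _ => ?_
          have hbf : (EuclideanSpace.basisFun (Fin m) ℂ) i = EuclideanSpace.single i (1:ℂ) := by
            simp [EuclideanSpace.basisFun_apply]
          rw [hdv]; dsimp only; rw [hbf]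
      _ ≤ (r : ℝ) := by exact_mod_cast hKrank
  -- columnwise lower bound for the right-hand side
  have hcol : ∀ j : Fin n, sv j ^ 2 * (1 - d' j) ≤ ∑ i : Fin m, ‖(S - N) i j‖ ^ 2 := by
    intro j
    by_cases hjm : (j : ℕ) < m
    · set i0 : Fin m := ⟨(j : ℕ), hjm⟩ with hi0
      set x : EuclideanSpace ℂ (Fin m) := ((sv j : ℝ) : ℂ) • EuclideanSpace.single i0 1 with hx
      set y : EuclideanSpace ℂ (Fin m) := eL.symm (Nᵀ j) with hy
      have hyK : y ∈ K := Submodule.mem_map_of_mem (Submodule.subset_span ⟨j, rfl⟩)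
      have hxy : ∀ i : Fin m, (x - y) i = (S - N) i j := by
        intro i
        have hyi : y i = N i j := rfl
        have hxi : x i = S i j := by
          rw [hx]
          show ((sv j : ℝ) : ℂ) * (EuclideanSpace.single i0 (1 : ℂ)) i = S i j
          rw [EuclideanSpace.single_apply]
          by_cases hii : i = i0
          · rw [if_pos hii, mul_one, hii, hsvdiag j hjm]
          · rw [if_neg hii, mul_zero, hSd i j (fun hc => hii (Fin.ext hc))]
        show x i - y i = S i j - N i j
        rw [hxi, hyi]
      have hsum : ∑ i : Fin m, ‖(S - N) i j‖ ^ 2 = ‖x - y‖ ^ 2 := by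
        rw [eucl_norm_sq]
        exact Finset.sum_congr rfl fun i _ => by rw [hxy i]
      have hxnorm : ‖x‖ ^ 2 = sv j ^ 2 := by
        rw [hx, norm_smul, EuclideanSpace.norm_single, norm_one, mul_one,
          Complex.norm_real, Real.norm_eq_abs, sq_abs]
      have hPx : ‖K.orthogonalProjectionOnto x‖ ^ 2 = sv j ^ 2 * d' j := by
        rw [hx, map_smul, norm_smul, mul_pow, Complex.norm_real, Real.norm_eq_abs, sq_abs]
        congr 1
        rw [hd']; dsimp only; rw [dif_pos hjm]
      have hb := proj_bound K x y hyK
      rw [hsum]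
      calc sv j ^ 2 * (1 - d' j) = ‖x‖ ^ 2 - ‖K.orthogonalProjectionOnto x‖ ^ 2 := by
            rw [hxnorm, hPx]; ring
        _ ≤ ‖x - y‖ ^ 2 := hb
    · have hsvz : sv j = 0 := by rw [hsv]; exact dif_neg hjm
      rw [hsvz]
      have : (0:ℝ) ^ 2 * (1 - d' j) = 0 := by ring
      rw [this]
      exact Finset.sum_nonneg fun i _ => sq_nonneg _
  rw [hLHS, frobSqC_col (S - N)]
  exact le_trans (rearrange sv d' hsv0 hsvmono hd'0 hd'1 hd'sum)
    (Finset.sum_le_sum fun j _ => hcol j)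

end Aux4

/-- Best tubal-rank-`r` approximation via truncated t-SVD reduces, in the
Fourier domain, to blockwise best rank-`r` approximation: if `T = U * Θ * V†`
is a t-SVD (in the Fourier domain, each frontal slice factorizes with unitary
factors and a nonnegative, decreasingly ordered f-diagonal middle factor),
then for `T_r` the truncated t-SVD we have
`‖T − T_r‖_F² = (1/k) Σ_ℓ ‖T̃⁽ℓ⁾ − (T̃_r)⁽ℓ⁾‖_F²`, and each `(T̃_r)⁽ℓ⁾` is a
best rank-`r` approximation of `T̃⁽ℓ⁾` in Frobenius norm. -/
theorem truncTSVD_best_rank_approx {k m n r : ℕ} [NeZero k]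
    (hrm : r ≤ m) (hrn : r ≤ n)
    (T : Fin m → Fin n → ZMod k → ℝ)
    (U : Fin m → Fin m → ZMod k → ℝ) (Θ : Fin m → Fin n → ZMod k → ℝ)
    (V : Fin n → Fin n → ZMod k → ℝ)
    (hfac : ∀ ℓ : ZMod k, dftSlice T ℓ = dftSlice U ℓ * dftSlice Θ ℓ * (dftSlice V ℓ)ᴴ)
    (hUu : ∀ ℓ : ZMod k, (dftSlice U ℓ)ᴴ * dftSlice U ℓ = 1)
    (hVu : ∀ ℓ : ZMod k, (dftSlice V ℓ)ᴴ * dftSlice V ℓ = 1)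
    (hdiag : ∀ (i : Fin m) (j : Fin n) (t : ZMod k), (i : ℕ) ≠ (j : ℕ) → Θ i j t = 0)
    (hpos : ∀ (ℓ : ZMod k) (i : Fin m) (j : Fin n), (i : ℕ) = (j : ℕ) →
      ∃ c : ℝ, 0 ≤ c ∧ dftSlice Θ ℓ i j = (c : ℂ))
    (hord : ∀ (ℓ : ZMod k) (i i' : Fin m) (j j' : Fin n),
      (i : ℕ) = (j : ℕ) → (i' : ℕ) = (j' : ℕ) → (i : ℕ) ≤ (i' : ℕ) →
      ‖dftSlice Θ ℓ i' j'‖ ≤ ‖dftSlice Θ ℓ i j‖) :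
    frobSq (fun i j t => T i j t - truncTSVD r hrm hrn U Θ V i j t) =
      (1 / (k : ℝ)) *
        ∑ ℓ : ZMod k, frobSqC (dftSlice T ℓ - dftSlice (truncTSVD r hrm hrn U Θ V) ℓ) ∧
    ∀ (ℓ : ZMod k) (B : Matrix (Fin m) (Fin n) ℂ), B.rank ≤ r →
      frobSqC (dftSlice T ℓ - dftSlice (truncTSVD r hrm hrn U Θ V) ℓ) ≤
        frobSqC (dftSlice T ℓ - B) := by
  constructor
  · rw [parseval_tensor (fun i j t => T i j t - truncTSVD r hrm hrn U Θ V i j t)]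
    congr 1
    exact Finset.sum_congr rfl fun ℓ _ => by rw [dftSlice_sub]
  · intro ℓ B hB
    have hUinv : dftSlice U ℓ * (dftSlice U ℓ)ᴴ = 1 := mul_eq_one_comm.mp (hUu ℓ)
    have hVinv : dftSlice V ℓ * (dftSlice V ℓ)ᴴ = 1 := mul_eq_one_comm.mp (hVu ℓ)
    have hTh_diag : ∀ (i : Fin m) (j : Fin n), (i : ℕ) ≠ (j : ℕ) → dftSlice Θ ℓ i j = 0 := by
      intro i j hij
      rw [dftSlice_apply]
      refine Finset.sum_eq_zero fun t _ => ?_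
      rw [hdiag i j t hij, Complex.ofReal_zero, zero_mul]
    rw [trunc_slice hrm hrn U Θ V ℓ]
    set N : Matrix (Fin m) (Fin n) ℂ := (dftSlice U ℓ)ᴴ * B * dftSlice V ℓ with hNdef
    have hNrank : N.rank ≤ r := le_trans (le_trans (Matrix.rank_mul_le_left _ _)
      (Matrix.rank_mul_le_right _ _)) hB
    have hre : dftSlice U ℓ * N * (dftSlice V ℓ)ᴴ = B := by
      rw [hNdef]
      have assoc : dftSlice U ℓ * ((dftSlice U ℓ)ᴴ * B * dftSlice V ℓ) * (dftSlice V ℓ)ᴴ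
          = (dftSlice U ℓ * (dftSlice U ℓ)ᴴ) * B * (dftSlice V ℓ * (dftSlice V ℓ)ᴴ) := by
        simp only [Matrix.mul_assoc]
      rw [assoc, hUinv, hVinv, Matrix.one_mul, Matrix.mul_one]
    have hdiff1 : dftSlice T ℓ - dftSlice U ℓ * Dmat r (dftSlice Θ ℓ) * (dftSlice V ℓ)ᴴ
        = dftSlice U ℓ * (dftSlice Θ ℓ - Dmat r (dftSlice Θ ℓ)) * (dftSlice V ℓ)ᴴ := by
      rw [hfac ℓ, ← Matrix.sub_mul, ← Matrix.mul_sub]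
    have hdiff2 : dftSlice T ℓ - B
        = dftSlice U ℓ * (dftSlice Θ ℓ - N) * (dftSlice V ℓ)ᴴ := by
      rw [Matrix.mul_sub, Matrix.sub_mul, hre, ← hfac ℓ]
    rw [hdiff1, hdiff2, frobSqC_unitary _ _ _ (hUu ℓ) (hVu ℓ),
      frobSqC_unitary _ _ _ (hUu ℓ) (hVu ℓ)]
    exact key_ineq r (dftSlice Θ ℓ) N hTh_diag (hpos ℓ) (hord ℓ) hNrank
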